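/- For all u, w ∈ V, the following are equivalent: (i) u ⪯ w, i.e., w − u is a finite sum (with repetitions allowed, possibly empty) of elements of S; (ii) (w₁−u₁)+(w₂−u₂) ≥ 0, (w₁−u₁)+(w₃−u₃) ≥ 0, and (w₂−u₂)+(w₃−u₃) ≥ 0. -/

import Mathlib

/-- The vertex set of the body-centered cubic lattice:
integer triples whose coordinates all have the same parity. -/
def bccVertices : Set (ℤ × ℤ × ℤ) :=
  {v | v.1 ≡ v.2.1 [ZMOD 2] ∧ v.2.1 ≡ v.2.2 [ZMOD 2]}

/-- The causal steps of the bcc lattice with respect to the sweep direction `t = (1,1,1)`: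
the edge vectors having positive inner product with `t`. -/
def causalSteps : Set (ℤ × ℤ × ℤ) :=
  {(2, 0, 0), (0, 2, 0), (0, 0, 2), (1, 1, 1), (1, 1, -1), (1, -1, 1), (-1, 1, 1)}

/-- `u ⪯ w` iff `w - u` is a finite sum (with repetitions allowed, possibly empty)
of causal steps, i.e. `w - u` lies in the additive submonoid generated by them. -/
def sweepLE (u w : ℤ × ℤ × ℤ) : Prop :=
  w - u ∈ AddSubmonoid.closure causalSteps

lemma key_aux : ∀ n : ℕ, ∀ d : ℤ × ℤ × ℤ, d.1 % 2 = d.2.1 % 2 → d.2.1 % 2 = d.2.2 % 2 →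
    0 ≤ d.1 + d.2.1 → 0 ≤ d.1 + d.2.2 → 0 ≤ d.2.1 + d.2.2 →
    (d.1 + d.2.1 + d.2.2).toNat = n → d ∈ AddSubmonoid.closure causalSteps := by
  intro n
  induction n using Nat.strong_induction_on with
  | _ n ih =>
    rintro ⟨a, b, c⟩ h1 h2 s12 s13 s23 hn
    simp only at h1 h2 s12 s13 s23 hn
    by_cases h0 : a + b + c = 0
    · have ha : a = 0 ∧ b = 0 ∧ c = 0 := by omega
      obtain ⟨rfl, rfl, rfl⟩ := ha
      exact zero_mem _
    · have hcase : 2 ≤ a + b ∨ 2 ≤ a + c ∨ 2 ≤ b + c := by omega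
      rcases hcase with h | h | h
      · have hd : ((a, b, c) : ℤ × ℤ × ℤ) = (1, 1, -1) + (a - 1, b - 1, c + 1) := by
          simp [Prod.ext_iff]
        rw [hd]
        exact add_mem (AddSubmonoid.subset_closure (by simp [causalSteps]))
          (ih (a + b + c - 1).toNat (by omega) (a - 1, b - 1, c + 1)
            (by dsimp only; omega) (by dsimp only; omega) (by dsimp only; omega) (by dsimp only; omega)
            (by dsimp only; omega) (by dsimp only; omega))
      · have hd : ((a, b, c) : ℤ × ℤ × ℤ) = (1, -1, 1) + (a - 1, b + 1, c - 1) := by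
          simp [Prod.ext_iff]
        rw [hd]
        exact add_mem (AddSubmonoid.subset_closure (by simp [causalSteps]))
          (ih (a + b + c - 1).toNat (by omega) (a - 1, b + 1, c - 1)
            (by dsimp only; omega) (by dsimp only; omega) (by dsimp only; omega) (by dsimp only; omega)
            (by dsimp only; omega) (by dsimp only; omega))
      · have hd : ((a, b, c) : ℤ × ℤ × ℤ) = (-1, 1, 1) + (a + 1, b - 1, c - 1) := by
          simp [Prod.ext_iff]
        rw [hd]
        exact add_mem (AddSubmonoid.subset_closure (by simp [causalSteps]))
          (ih (a + b + c - 1).toNat (by omega) (a + 1, b - 1, c - 1)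
            (by dsimp only; omega) (by dsimp only; omega) (by dsimp only; omega) (by dsimp only; omega)
            (by dsimp only; omega) (by dsimp only; omega))

lemma fwd_aux {d : ℤ × ℤ × ℤ} (hd : d ∈ AddSubmonoid.closure causalSteps) :
    0 ≤ d.1 + d.2.1 ∧ 0 ≤ d.1 + d.2.2 ∧ 0 ≤ d.2.1 + d.2.2 := by
  induction hd using AddSubmonoid.closure_induction with
  | mem x hx =>
    simp only [causalSteps, Set.mem_insert_iff, Set.mem_singleton_iff] at hx
    rcases hx with rfl | rfl | rfl | rfl | rfl | rfl | rfl <;> norm_num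
  | zero => norm_num
  | add x y _ _ hx hy =>
    obtain ⟨h1, h2, h3⟩ := hx
    obtain ⟨h4, h5, h6⟩ := hy
    refine ⟨?_, ?_, ?_⟩ <;> simp only [Prod.fst_add, Prod.snd_add] <;> omega

theorem statement12 (u w : ℤ × ℤ × ℤ) (hu : u ∈ bccVertices) (hw : w ∈ bccVertices) :
    sweepLE u w ↔
      0 ≤ (w.1 - u.1) + (w.2.1 - u.2.1) ∧
      0 ≤ (w.1 - u.1) + (w.2.2 - u.2.2) ∧
      0 ≤ (w.2.1 - u.2.1) + (w.2.2 - u.2.2) := by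
  obtain ⟨hu1, hu2⟩ := hu
  obtain ⟨hw1, hw2⟩ := hw
  unfold Int.ModEq at hu1 hu2 hw1 hw2
  constructor
  · intro h
    have := fwd_aux h
    simpa [Prod.fst_sub, Prod.snd_sub] using this
  · rintro ⟨h1, h2, h3⟩
    refine key_aux ((w.1 - u.1) + (w.2.1 - u.2.1) + (w.2.2 - u.2.2)).toNat (w - u) ?_ ?_ ?_ ?_ ?_ ?_ <;>
      simp only [Prod.fst_sub, Prod.snd_sub] <;> omega
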